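/- Let Y be a totally disconnected, second countable, locally compact Hausdorff space. Then every sheaf of abelian groups on Y is soft: for any closed subset K ⊆ Y, every section of the sheaf over K extends to a global section over Y. -/

import Mathlib

open TopologicalSpace Opposite CategoryTheory

/-- A section of the sheaf `F` over the subset `K`, encoded as a compatible family of germs:
an assignment of an element of the stalk at each point of `K` which locally comes from
actual sections of `F` on open neighborhoods. (For a subspace `K`, the sections over `K`
of the inverse-image sheaf are exactly such families.) -/
def IsSectionOver {Y : TopCat} (F : TopCat.Sheaf AddCommGrpCat Y) (K : Set Y)
    (s : ∀ y : Y, y ∈ K → F.presheaf.stalk y) : Prop :=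
  ∀ y : Y, ∀ hy : y ∈ K, ∃ (U : Opens Y) (hyU : y ∈ U) (t : F.presheaf.obj (op U)),
    ∀ y' : Y, ∀ hy' : y' ∈ K, ∀ hy'U : y' ∈ U,
      F.presheaf.germ U y' hy'U t = s y' hy'

/-- Let `Y` be a totally disconnected, second countable, locally compact
Hausdorff space. Then every sheaf of abelian groups on `Y` is soft: for any closed subset
`K ⊆ Y`, every section of the sheaf over `K` extends to a global section over `Y`. -/
theorem sheaf_soft_of_totallyDisconnected (Y : TopCat)
    [TotallyDisconnectedSpace Y] [SecondCountableTopology Y]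
    [LocallyCompactSpace Y] [T2Space Y]
    (F : TopCat.Sheaf AddCommGrpCat Y) (K : Set Y) (hK : IsClosed K)
    (s : ∀ y : Y, y ∈ K → F.presheaf.stalk y) (hs : IsSectionOver F K s) :
    ∃ s' : F.presheaf.obj (op ⊤),
      ∀ y : Y, ∀ hy : y ∈ K, F.presheaf.germ ⊤ y (by trivial) s' = s y hy := by
  classical
  by_cases hY : Nonempty Y
  swap
  · exact ⟨0, fun y _ => absurd ⟨y⟩ hY⟩
  -- Choose, for each point, an open neighborhood with a section agreeing with `s` on `K`.
  have key : ∀ y : Y, ∃ (U : Opens Y), y ∈ U ∧ ∃ t : F.presheaf.obj (op U),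
      ∀ (y' : Y) (hy' : y' ∈ K) (hU : y' ∈ U), F.presheaf.germ U y' hU t = s y' hy' := by
    intro y
    by_cases hy : y ∈ K
    · obtain ⟨U, hyU, t, ht⟩ := hs y hy
      exact ⟨U, hyU, t, ht⟩
    · refine ⟨⟨Kᶜ, hK.isOpen_compl⟩, hy, 0, ?_⟩
      intro y' hy' hU
      exact absurd hy' hU
  choose U hU t ht using key
  -- Shrink to clopen neighborhoods.
  have key2 : ∀ y : Y, ∃ N : Set Y, IsClopen N ∧ y ∈ N ∧ N ⊆ (U y : Set Y) := by
    intro y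
    obtain ⟨v, hv, hyv, hvU⟩ :=
      loc_compact_Haus_tot_disc_of_zero_dim.mem_nhds_iff.1 ((U y).isOpen.mem_nhds (hU y))
    exact ⟨v, hv, hyv, hvU⟩
  choose N hNclopen hyN hNU using key2
  -- Countable subcover.
  obtain ⟨T, hTc, hTU⟩ := TopologicalSpace.isOpen_iUnion_countable N fun y => (hNclopen y).isOpen
  have hNuniv : ⋃ y ∈ T, N y = Set.univ := by
    rw [hTU]
    exact Set.eq_univ_of_forall fun y => Set.mem_iUnion.mpr ⟨y, hyN y⟩
  have hTne : T.Nonempty := by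
    rcases hY with ⟨y₀⟩
    by_contra h
    rw [Set.not_nonempty_iff_eq_empty] at h
    simp [h] at hNuniv
    exact (Set.eq_empty_iff_forall_notMem.mp hNuniv.symm y₀) trivial
  obtain ⟨f, hf⟩ := hTc.exists_eq_range hTne
  have hcov : ∀ y : Y, ∃ n : ℕ, y ∈ N (f n) := by
    intro y
    have : y ∈ ⋃ z ∈ T, N z := hNuniv ▸ Set.mem_univ y
    obtain ⟨z, hz, hyz⟩ := Set.mem_iUnion₂.mp this
    rw [hf] at hz
    obtain ⟨n, rfl⟩ := hz
    exact ⟨n, hyz⟩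
  -- Disjointify: V n = N (f n) minus the earlier ones; these are clopen.
  have hVclopen : ∀ n : ℕ, IsClopen (N (f n) ∩ ⋂ m ∈ Finset.range n, (N (f m))ᶜ) := by
    intro n
    exact (hNclopen (f n)).inter (isClopen_biInter_finset fun m _ => (hNclopen (f m)).compl)
  let V : ℕ → Opens Y := fun n => ⟨_, (hVclopen n).isOpen⟩
  have hVmem : ∀ n (y : Y), y ∈ V n ↔ y ∈ N (f n) ∧ ∀ m < n, y ∉ N (f m) := by
    intro n y
    constructor
    · rintro ⟨h1, h2⟩
      refine ⟨h1, fun m hm => ?_⟩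
      have := Set.mem_iInter₂.mp h2 m (Finset.mem_range.mpr hm)
      exact this
    · rintro ⟨h1, h2⟩
      exact ⟨h1, Set.mem_iInter₂.mpr fun m hm => h2 m (Finset.mem_range.mp hm)⟩
  have hVcov : ∀ y : Y, ∃ n, y ∈ V n := by
    intro y
    have h := hcov y
    refine ⟨Nat.find h, (hVmem _ y).mpr ⟨Nat.find_spec h, fun m hm => Nat.find_min h hm⟩⟩
  have hVdisj : ∀ n m, n ≠ m → V n ⊓ V m = ⊥ := by
    intro n m hnm
    rw [eq_bot_iff]
    rintro y ⟨hyn, hym⟩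
    rcases lt_or_gt_of_ne hnm with h | h
    · exact ((hVmem m y).mp hym).2 n h ((hVmem n y).mp hyn).1
    · exact ((hVmem n y).mp hyn).2 m h ((hVmem m y).mp hym).1
  have hVle : ∀ n, V n ≤ U (f n) := fun n y hy => hNU (f n) ((hVmem n y).mp hy).1
  -- Sections on the pieces.
  let sf : ∀ n : ℕ, F.presheaf.obj (op (V n)) :=
    fun n => F.presheaf.map (homOfLE (hVle n)).op (t (f n))
  -- Sections over the empty open set are all equal.
  have hbot : ∀ (W : Opens Y), W = ⊥ → ∀ a b : F.presheaf.obj (op W), a = b := by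
    intro W hW a b
    refine F.eq_of_locally_eq' (fun i : PEmpty.{1} => ⊥) W (fun i => i.elim) ?_ a b
      (fun i => i.elim)
    rw [hW]
    exact le_iSup_iff.mpr fun b hb => le_refl _ |>.trans (by simp)
  -- Compatibility.
  have hcompat : TopCat.Presheaf.IsCompatible F.presheaf V sf := by
    intro n m
    by_cases hnm : n = m
    · subst hnm
      rw [Subsingleton.elim (Opens.infLELeft (V n) (V n)) (Opens.infLERight (V n) (V n))]
    · exact hbot _ (hVdisj n m hnm) _ _
  obtain ⟨s', hs', -⟩ := F.existsUnique_gluing' V ⊤ (fun n => homOfLE le_top)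
    (fun y _ => Opens.mem_iSup.mpr (hVcov y)) sf hcompat
  refine ⟨s', ?_⟩
  intro y hy
  obtain ⟨n, hyn⟩ := hVcov y
  have h1 : F.presheaf.germ (V n) y hyn (F.presheaf.map (homOfLE (le_top : V n ≤ ⊤)).op s')
      = F.presheaf.germ ⊤ y trivial s' := F.presheaf.germ_res_apply _ y hyn s'
  rw [← h1, hs' n]
  show F.presheaf.germ (V n) y hyn (F.presheaf.map (homOfLE (hVle n)).op (t (f n))) = s y hy
  rw [F.presheaf.germ_res_apply]
  exact ht (f n) y hy _
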